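/- Zero-curvature (pseudopotential) representation of the dispersionless Hirota equation: let a1, a2, a3 be real constants with a1 + a2 + a3 = 0, and let Z be a C² function on an open subset of ℝ³ (coordinates x, y, t) with Z_x ≠ 0 everywhere, satisfying a1·Z_x·Z_{yt} + a2·Z_y·Z_{xt} + a3·Z_t·Z_{xy} = 0. Then for every real λ with a1·λ + a3 ≠ 0, the functions α = −(a2·λ/(a1·λ + a3))·(Z_y/Z_x) and β = λ·(Z_t/Z_x) satisfy the compatibility identity α_t + α·β_x = β_y + β·α_x on the whole domain. -/

import Mathlib

/-- Auxiliary: directional derivative of `c * (u / v)`. -/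
lemma fderiv_cdiv_aux {E : Type*} [NormedAddCommGroup E] [NormedSpace ℝ E]
    (c : ℝ) (u v : E → ℝ) (p : E) (hu : DifferentiableAt ℝ u p)
    (hv : DifferentiableAt ℝ v p) (hvp : v p ≠ 0) (w : E) :
    fderiv ℝ (fun q => c * (u q / v q)) p w
      = c * ((fderiv ℝ u p w * v p - u p * fderiv ℝ v p w) / (v p)^2) := by
  have hinv : HasFDerivAt (fun q => (v q)⁻¹) ((-(v p ^ 2)⁻¹) • fderiv ℝ v p) p :=
    HasDerivAt.comp_hasFDerivAt p (by simpa using hasDerivAt_inv hvp) hv.hasFDerivAt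
  have hmul : HasFDerivAt (fun q => u q * (v q)⁻¹)
      (u p • ((-(v p ^ 2)⁻¹) • fderiv ℝ v p) + (v p)⁻¹ • fderiv ℝ u p) p :=
    hu.hasFDerivAt.mul hinv
  have h : HasFDerivAt (fun q => c * (u q / v q))
      (c • (u p • ((-(v p ^ 2)⁻¹) • fderiv ℝ v p) + (v p)⁻¹ • fderiv ℝ u p)) p := by
    simp only [div_eq_mul_inv]
    exact hmul.const_mul c
  rw [h.fderiv]
  simp only [ContinuousLinearMap.coe_smul', Pi.smul_apply, ContinuousLinearMap.add_apply,
    smul_eq_mul]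
  field_simp
  ring

/-- Auxiliary: the purely algebraic identity underlying the pseudopotential compatibility. -/
lemma alg9_aux (a1 a2 lam Zx Zy Zt A B C D : ℝ) (hx : Zx ≠ 0) (hl : a1*lam + (-a1-a2) ≠ 0)
    (hH0 : a1*Zx*A + a2*Zy*B + (-a1-a2)*Zt*C = 0) :
    -(a2*lam/(a1*lam+(-a1-a2)))*((A*Zx - Zy*B)/Zx^2)
      + (-(a2*lam/(a1*lam+(-a1-a2)))*(Zy/Zx)) * (lam*((B*Zx - Zt*D)/Zx^2))
    = lam*((A*Zx - Zt*C)/Zx^2)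
      + (lam*(Zt/Zx)) * (-(a2*lam/(a1*lam+(-a1-a2)))*((C*Zx - Zy*D)/Zx^2)) := by
  have expand :
      -(a2*lam/(a1*lam+(-a1-a2)))*((A*Zx - Zy*B)/Zx^2)
        + (-(a2*lam/(a1*lam+(-a1-a2)))*(Zy/Zx)) * (lam*((B*Zx - Zt*D)/Zx^2))
      = (lam*((A*Zx - Zt*C)/Zx^2)
          + (lam*(Zt/Zx)) * (-(a2*lam/(a1*lam+(-a1-a2)))*((C*Zx - Zy*D)/Zx^2)))
        + (-(lam*(lam-1))/((a1*lam+(-a1-a2))*Zx^2)) * (a1*Zx*A + a2*Zy*B + (-a1-a2)*Zt*C) := by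
    have hl' : lam * a1 + (-a1 - a2) ≠ 0 := by rwa [mul_comm]
    field_simp
    ring
  rw [expand, hH0]
  ring

/-- Partial derivative in `x` (first coordinate of `ℝ³ = ℝ × ℝ × ℝ` with coordinates
`(x, y, t)`). -/
noncomputable def pX (F : ℝ × ℝ × ℝ → ℝ) (p : ℝ × ℝ × ℝ) : ℝ := fderiv ℝ F p (1, 0, 0)
/-- Partial derivative in `y`. -/
noncomputable def pY (F : ℝ × ℝ × ℝ → ℝ) (p : ℝ × ℝ × ℝ) : ℝ := fderiv ℝ F p (0, 1, 0)
/-- Partial derivative in `t`. -/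
noncomputable def pT (F : ℝ × ℝ × ℝ → ℝ) (p : ℝ × ℝ × ℝ) : ℝ := fderiv ℝ F p (0, 0, 1)

/-- pseudopotential representation of the dispersionless Hirota equation:
if `a₁ + a₂ + a₃ = 0`, `Z` is C² with `Z_x ≠ 0` on an open `Ω ⊆ ℝ³` and satisfies
`a₁ Z_x Z_{yt} + a₂ Z_y Z_{xt} + a₃ Z_t Z_{xy} = 0`, then for every `λ` with
`a₁λ + a₃ ≠ 0` the functions `α = −(a₂λ/(a₁λ+a₃)) Z_y/Z_x`, `β = λ Z_t/Z_x`
satisfy `α_t + α β_x = β_y + β α_x` on `Ω`. -/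
theorem stmt_9 (a1 a2 a3 : ℝ) (ha : a1 + a2 + a3 = 0)
    (Ω : Set (ℝ × ℝ × ℝ)) (hΩ : IsOpen Ω)
    (Z : ℝ × ℝ × ℝ → ℝ) (hZ : ContDiffOn ℝ 2 Z Ω)
    (hZx : ∀ p ∈ Ω, pX Z p ≠ 0)
    (hHirota : ∀ p ∈ Ω,
      a1 * pX Z p * pT (fun q => pY Z q) p + a2 * pY Z p * pT (fun q => pX Z q) p
        + a3 * pT Z p * pY (fun q => pX Z q) p = 0)
    (lam : ℝ) (hlam : a1 * lam + a3 ≠ 0)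
    (α β : ℝ × ℝ × ℝ → ℝ)
    (hα : ∀ p, α p = -(a2 * lam / (a1 * lam + a3)) * (pY Z p / pX Z p))
    (hβ : ∀ p, β p = lam * (pT Z p / pX Z p)) :
    ∀ p ∈ Ω, pT α p + α p * pX β p = pY β p + β p * pX α p := by
  have hαf : α = fun q => -(a2 * lam / (a1 * lam + a3)) * (pY Z q / pX Z q) := funext hα
  have hβf : β = fun q => lam * (pT Z q / pX Z q) := funext hβ
  intro p hp
  have hmem : Ω ∈ nhds p := hΩ.mem_nhds hp
  have hZc : ContDiffAt ℝ 2 Z p := hZ.contDiffAt hmem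
  have hD : DifferentiableAt ℝ (fderiv ℝ Z) p :=
    (hZc.fderiv_right (m := 1) (by norm_num)).differentiableAt one_ne_zero
  have hg : ∀ v : ℝ × ℝ × ℝ, DifferentiableAt ℝ (fun q => fderiv ℝ Z q v) p :=
    fun v => hD.clm_apply (differentiableAt_const v)
  set H := fderiv ℝ (fderiv ℝ Z) p with hHdef
  have key : ∀ v w : ℝ × ℝ × ℝ, fderiv ℝ (fun q => fderiv ℝ Z q v) p w = H w v := by
    intro v w
    rw [fderiv_clm_apply hD (differentiableAt_const v)]
    simp [H]
  have hsymm : ∀ v w : ℝ × ℝ × ℝ, H v w = H w v :=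
    fun v w => (hZc.isSymmSndFDerivAt (by norm_num)) v w
  have hx0 : pX Z p ≠ 0 := hZx p hp
  -- the Hirota relation in terms of the second derivative H
  have hH0 : a1 * pX Z p * H (0,0,1) (0,1,0) + a2 * pY Z p * H (0,0,1) (1,0,0)
      + a3 * pT Z p * H (0,1,0) (1,0,0) = 0 := by
    have := hHirota p hp
    simpa only [pX, pY, pT, key] using this
  -- first derivatives of α and β in an arbitrary direction
  have hαd : ∀ w, fderiv ℝ α p w
      = -(a2 * lam / (a1 * lam + a3))
          * ((H w (0,1,0) * pX Z p - pY Z p * H w (1,0,0)) / (pX Z p) ^ 2) := by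
    intro w
    rw [hαf,
      fderiv_cdiv_aux (-(a2 * lam / (a1 * lam + a3))) (fun q => pY Z q) (fun q => pX Z q)
        p (hg (0,1,0)) (hg (1,0,0)) hx0 w]
    simp only [pX, pY, key]
  have hβd : ∀ w, fderiv ℝ β p w
      = lam * ((H w (0,0,1) * pX Z p - pT Z p * H w (1,0,0)) / (pX Z p) ^ 2) := by
    intro w
    rw [hβf,
      fderiv_cdiv_aux lam (fun q => pT Z q) (fun q => pX Z q)
        p (hg (0,0,1)) (hg (1,0,0)) hx0 w]
    simp only [pX, pT, key]
  have eαt : pT α p = -(a2 * lam / (a1 * lam + a3))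
      * ((H (0,0,1) (0,1,0) * pX Z p - pY Z p * H (0,0,1) (1,0,0)) / (pX Z p) ^ 2) := hαd _
  have eαx : pX α p = -(a2 * lam / (a1 * lam + a3))
      * ((H (0,1,0) (1,0,0) * pX Z p - pY Z p * H (1,0,0) (1,0,0)) / (pX Z p) ^ 2) := by
    rw [pX, hαd, hsymm (1,0,0) (0,1,0)]
  have eβx : pX β p = lam
      * ((H (0,0,1) (1,0,0) * pX Z p - pT Z p * H (1,0,0) (1,0,0)) / (pX Z p) ^ 2) := by
    rw [pX, hβd, hsymm (1,0,0) (0,0,1)]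
  have eβy : pY β p = lam
      * ((H (0,0,1) (0,1,0) * pX Z p - pT Z p * H (0,1,0) (1,0,0)) / (pX Z p) ^ 2) := by
    rw [pY, hβd, hsymm (0,1,0) (0,0,1)]
  have ept : pT α p = fderiv ℝ α p (0,0,1) := rfl
  rw [show pT α p = fderiv ℝ α p (0,0,1) from rfl] at eαt
  rw [show pT α p = fderiv ℝ α p (0,0,1) from rfl]
  rw [eαt, eαx, eβx, eβy, hα p, hβ p]
  have ha3 : a3 = -a1 - a2 := by linarith
  subst ha3
  exact alg9_aux a1 a2 lam (pX Z p) (pY Z p) (pT Z p)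
    (H (0,0,1) (0,1,0)) (H (0,0,1) (1,0,0)) (H (0,1,0) (1,0,0)) (H (1,0,0) (1,0,0))
    hx0 hlam hH0
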